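/- Let α¹,…,αⁿ ∈ ℝ^d be linearly independent vectors, let β ∈ ℝ^d, let ε ∈ (0,1)^d, and suppose there is K ∈ (0,1) such that K·ε^β ≤ ε^{α^k} ≤ ε^β for all 1 ≤ k ≤ n (where ε^α denotes ∏_j ε_j^{α_j}). Then there exists b ∈ (0,1), depending only on α¹,…,αⁿ and K (not on ε), and a vector y ∈ [b, b⁻¹]^d such that y^{α^k} = ε^{α^k − β} for all 1 ≤ k ≤ n. -/

import Mathlib

open Finset

/-- Proposition 3.1 (first part). Given linearly independent
`α¹,…,αⁿ` and `K ∈ (0,1)`, there is `b ∈ (0,1)` depending only on the `αᵏ` and `K`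
such that whenever `ε ∈ (0,1)^d` and `β` satisfy `K ε^β ≤ ε^{αᵏ} ≤ ε^β` for all `k`,
there is `y ∈ [b, b⁻¹]^d` with `y^{αᵏ} = ε^{αᵏ - β}` for all `k`. -/
theorem stmt0 (d n : ℕ) (α : Fin n → Fin d → ℝ) (hα : LinearIndependent ℝ α)
    (K : ℝ) (hK : 0 < K) (hK1 : K < 1) :
    ∃ b : ℝ, 0 < b ∧ b < 1 ∧
      ∀ (β ε : Fin d → ℝ), (∀ j, 0 < ε j ∧ ε j < 1) →
        (∀ k, K * ∏ j, ε j ^ β j ≤ ∏ j, ε j ^ α k j ∧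
              ∏ j, ε j ^ α k j ≤ ∏ j, ε j ^ β j) →
        ∃ y : Fin d → ℝ, (∀ j, b ≤ y j ∧ y j ≤ b⁻¹) ∧
          ∀ k, ∏ j, y j ^ α k j = ∏ j, ε j ^ (α k j - β j) := by
  classical
  set A : Matrix (Fin n) (Fin d) ℝ := Matrix.of α with hA
  -- the rows of `A` are linearly independent, hence `A.mulVecLin` is surjective
  have hrankT : A.transpose.rank = n := by
    rw [Matrix.rank, Matrix.range_mulVecLin]
    have : Set.range A.transpose.col = Set.range α := rfl
    rw [this, finrank_span_eq_card hα, Fintype.card_fin]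
  have hrank : A.rank = n := by rw [← Matrix.rank_transpose, hrankT]
  have hsurj : LinearMap.range A.mulVecLin = ⊤ := by
    apply Submodule.eq_top_of_finrank_eq
    rw [← Matrix.rank, hrank, Module.finrank_pi, Fintype.card_fin]
  obtain ⟨T, hT⟩ := A.mulVecLin.exists_rightInverse_of_surjective hsurj
  set L : ℝ := -Real.log K with hL
  have hLpos : 0 < L := by
    have := Real.log_neg hK hK1
    simp only [hL]; linarith
  set M : ℝ := ∑ k : Fin n, ∑ j : Fin d, |T (Pi.single k 1) j| with hM
  have hM0 : 0 ≤ M := by positivity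
  refine ⟨Real.exp (-(L * M) - 1), Real.exp_pos _, ?_, ?_⟩
  · rw [Real.exp_lt_one_iff]
    nlinarith
  intro β ε hε hcond
  set c : Fin n → ℝ := fun k => ∑ j, (α k j - β j) * Real.log (ε j) with hc
  -- bounds on `c k`
  have hcbound : ∀ k, |c k| ≤ L := by
    intro k
    obtain ⟨h1, h2⟩ := hcond k
    have hQpos : (0:ℝ) < ∏ j, ε j ^ α k j := by
      apply Finset.prod_pos; intro j _; exact Real.rpow_pos_of_pos (hε j).1 _
    have hPpos : (0:ℝ) < ∏ j, ε j ^ β j := by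
      apply Finset.prod_pos; intro j _; exact Real.rpow_pos_of_pos (hε j).1 _
    have hlogQ : Real.log (∏ j, ε j ^ α k j) = ∑ j, α k j * Real.log (ε j) := by
      rw [Real.log_prod (fun j _ => (Real.rpow_pos_of_pos (hε j).1 _).ne')]
      exact Finset.sum_congr rfl fun j _ => Real.log_rpow (hε j).1 _
    have hlogP : Real.log (∏ j, ε j ^ β j) = ∑ j, β j * Real.log (ε j) := by
      rw [Real.log_prod (fun j _ => (Real.rpow_pos_of_pos (hε j).1 _).ne')]
      exact Finset.sum_congr rfl fun j _ => Real.log_rpow (hε j).1 _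
    have hck : c k = Real.log (∏ j, ε j ^ α k j) - Real.log (∏ j, ε j ^ β j) := by
      rw [hlogQ, hlogP, ← Finset.sum_sub_distrib]
      exact Finset.sum_congr rfl fun j _ => by ring
    have hle1 : Real.log K + Real.log (∏ j, ε j ^ β j) ≤ Real.log (∏ j, ε j ^ α k j) := by
      rw [← Real.log_mul hK.ne' hPpos.ne']
      exact Real.log_le_log (by positivity) h1
    have hle2 : Real.log (∏ j, ε j ^ α k j) ≤ Real.log (∏ j, ε j ^ β j) :=
      Real.log_le_log hQpos h2
    rw [abs_le]
    constructor <;> [skip; skip] <;> simp only [hck, hL] <;> linarith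
  -- the solution in log coordinates
  set s : Fin d → ℝ := T c with hs
  have hsj : ∀ j, |s j| ≤ L * M := by
    intro j
    have key : ∀ v : Fin n → ℝ, T v j = ∑ k : Fin n, v k * T (Pi.single k 1) j := by
      intro v
      conv_lhs => rw [← Finset.univ_sum_single v]
      rw [map_sum]
      simp only [Finset.sum_apply]
      refine Finset.sum_congr rfl fun k _ => ?_
      have h1 : (Pi.single k (v k) : Fin n → ℝ) = v k • (Pi.single k 1 : Fin n → ℝ) := by
        rw [← Pi.single_smul]
        norm_num
      rw [h1, map_smul]
      simp
    have hsj' : s j = ∑ k : Fin n, c k * T (Pi.single k 1) j := key c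
    rw [hsj']
    calc |∑ k : Fin n, c k * T (Pi.single k 1) j|
        ≤ ∑ k : Fin n, |c k * T (Pi.single k 1) j| := Finset.abs_sum_le_sum_abs _ _
      _ ≤ ∑ k : Fin n, L * |T (Pi.single k 1) j| := by
          apply Finset.sum_le_sum; intro k _
          rw [abs_mul]
          exact mul_le_mul_of_nonneg_right (hcbound k) (abs_nonneg _)
      _ = L * ∑ k : Fin n, |T (Pi.single k 1) j| := by rw [Finset.mul_sum]
      _ ≤ L * M := by
          apply mul_le_mul_of_nonneg_left _ hLpos.le
          rw [hM]
          apply Finset.sum_le_sum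
          intro k _
          exact Finset.single_le_sum (f := fun i => |T (Pi.single k 1) i|)
            (fun i _ => abs_nonneg _) (Finset.mem_univ j)
  refine ⟨fun j => Real.exp (s j), ?_, ?_⟩
  · intro j
    have := hsj j
    rw [abs_le] at this
    constructor
    · exact Real.exp_le_exp.2 (by linarith)
    · rw [← Real.exp_neg]
      exact Real.exp_le_exp.2 (by linarith)
  · intro k
    have hAc : ∑ j, α k j * s j = c k := by
      have := congrArg (fun f => f c) hT
      have h2 : A.mulVecLin (T c) = c := this
      have h3 := congrArg (fun f => f k) h2
      simpa [Matrix.mulVecLin_apply, Matrix.mulVec, dotProduct, hA, hs] using h3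
    calc ∏ j, Real.exp (s j) ^ α k j
        = ∏ j, Real.exp (s j * α k j) := by
          refine Finset.prod_congr rfl fun j _ => ?_
          rw [Real.rpow_def_of_pos (Real.exp_pos _), Real.log_exp]
      _ = Real.exp (∑ j, s j * α k j) := (Real.exp_sum _ _).symm
      _ = Real.exp (c k) := by rw [← hAc]; congr 1; exact Finset.sum_congr rfl fun j _ => mul_comm _ _
      _ = ∏ j, ε j ^ (α k j - β j) := by
          rw [hc, Real.exp_sum]
          refine Finset.prod_congr rfl fun j _ => ?_
          rw [Real.rpow_def_of_pos (hε j).1]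
          ring_nf
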